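/- Let H be a complex Hilbert space, A : H → H a bounded self-adjoint operator, and c : H → H a bounded operator with c* = -c and c ∘ c = -I such that A ∘ c = -c ∘ A. Let l ∈ ℝ, 0 < ε < ∞, and f : (0,ε) → (0,∞) continuous. If φ : (0,ε) → H is continuously differentiable, satisfies φ'(x) + A(φ(x)) = -l·f(x)·c(φ(x)) for all x ∈ (0,ε), and ∫₀^ε ‖φ(x)‖² f(x) dx < ∞, then the function x ↦ (d/dx)‖exp(xA)(φ(x))‖² is Lebesgue-integrable on (0,ε); consequently the limit lim_{x→0⁺} ‖exp(xA)(φ(x))‖² exists and is finite. -/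

import Mathlib

open MeasureTheory Set Filter
set_option synthInstance.maxHeartbeats 1000000
set_option maxHeartbeats 1000000

/-- With `A` bounded self-adjoint, `c` a skew-adjoint involution anti-commuting with `A`,
`l` real, `0 < ε < ∞`, `f : (0,ε) → (0,∞)` continuous, and `φ` a continuously
differentiable solution of `φ' + Aφ = -l f c φ` which is square-integrable with respect
to `f dx`, the derivative of `x ↦ ‖exp(xA)(φ(x))‖²` is Lebesgue-integrable on `(0,ε)`;
consequently `lim_{x→0⁺} ‖exp(xA)(φ(x))‖²` exists and is finite. -/
theorem deriv_norm_sq_integrable_and_limit_exists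
    {H : Type*} [NormedAddCommGroup H] [InnerProductSpace ℂ H] [CompleteSpace H]
    (A c : H →L[ℂ] H) (hA : IsSelfAdjoint A)
    (hc_skew : ContinuousLinearMap.adjoint c = -c)
    (hc_sq : c ∘L c = -ContinuousLinearMap.id ℂ H)
    (hAc : A ∘L c = -(c ∘L A))
    (l : ℝ) (ε : ℝ) (hε : 0 < ε)
    (f : ℝ → ℝ) (hf_cont : ContinuousOn f (Set.Ioo 0 ε))
    (hf_pos : ∀ x ∈ Set.Ioo 0 ε, 0 < f x)
    (φ : ℝ → H)
    (hφ_ode : ∀ x ∈ Set.Ioo 0 ε,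
      HasDerivAt φ (-(A (φ x)) - ((l * f x : ℝ) : ℂ) • c (φ x)) x)
    (hφ_deriv_cont : ContinuousOn (deriv φ) (Set.Ioo 0 ε))
    (hφ_L2 : ∫⁻ x in Set.Ioo 0 ε, ENNReal.ofReal (‖φ x‖ ^ 2 * f x) < ⊤) :
    MeasureTheory.IntegrableOn
      (deriv fun x : ℝ => ‖NormedSpace.exp ((x : ℂ) • A) (φ x)‖ ^ 2)
      (Set.Ioo 0 ε) MeasureTheory.volume ∧
    ∃ L : ℝ, Filter.Tendsto (fun x : ℝ => ‖NormedSpace.exp ((x : ℂ) • A) (φ x)‖ ^ 2)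
      (nhdsWithin 0 (Set.Ioi 0)) (nhds L) := by
  letI : InnerProductSpace ℝ H := InnerProductSpace.complexToReal
  set E : ℝ → (H →L[ℂ] H) := fun y => NormedSpace.exp ((y : ℂ) • A) with hEdef
  -- derivative of E
  have hE : ∀ y : ℝ, HasDerivAt E (E y * A) y := by
    intro y
    have h0 := ((hasDerivAt_exp_smul_const A (y : ℂ)).hasFDerivAt.restrictScalars ℝ).comp y
      Complex.ofRealCLM.hasFDerivAt
    simpa [Function.comp_def, hEdef] using h0.hasDerivAt
  set Er : ℝ → (H →L[ℝ] H) := fun y => (E y).restrictScalars ℝ with hErdef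
  have hEr : ∀ y : ℝ, HasDerivAt Er ((E y * A).restrictScalars ℝ) y := by
    intro y
    have h0 := ((ContinuousLinearMap.restrictScalarsL ℂ H H ℝ ℝ).hasFDerivAt.comp y
      (hE y).hasFDerivAt).hasDerivAt
    simpa [Function.comp_def, hErdef] using h0
  have hEcont : Continuous E := by
    rw [continuous_iff_continuousAt]; exact fun y => (hE y).continuousAt
  have hφcont : ContinuousOn φ (Ioo 0 ε) := fun x hx =>
    ((hφ_ode x hx).continuousAt).continuousWithinAt
  set s : ℝ → ℂ := fun x => ((l * f x : ℝ) : ℂ) with hsdef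
  set ψ : ℝ → H := fun y => E y (φ y) with hψdef
  -- derivative of ψ
  have hψ : ∀ x ∈ Ioo 0 ε, HasDerivAt ψ (-(s x) • (E x) (c (φ x))) x := by
    intro x hx
    have h2 := (hEr x).clm_apply (hφ_ode x hx)
    have heq : ((E x * A).restrictScalars ℝ) (φ x)
        + (Er x) (-(A (φ x)) - s x • c (φ x)) = -(s x) • (E x) (c (φ x)) := by
      simp only [ContinuousLinearMap.coe_restrictScalars', ContinuousLinearMap.mul_apply,
        hErdef, map_sub, map_neg, ContinuousLinearMap.map_smul, neg_smul]
      abel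
    rw [heq] at h2
    exact h2
  set g : ℝ → ℝ := fun x => ‖ψ x‖ ^ 2 with hgdef
  set D : ℝ → ℝ := fun x => 2 * (inner ℝ (ψ x) (-(s x) • (E x) (c (φ x))) : ℝ) with hDdef
  have hg : ∀ x ∈ Ioo 0 ε, HasDerivAt g (D x) x := fun x hx => (hψ x hx).norm_sq
  -- bound on E
  obtain ⟨M, hM⟩ := (isCompact_Icc (a := (0:ℝ)) (b := ε)).exists_bound_of_continuousOn
    hEcont.continuousOn
  have hM0 : 0 ≤ M := le_trans (norm_nonneg _) (hM 0 ⟨le_refl 0, hε.le⟩)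
  set C : ℝ := 2 * (M * (|l| * (‖c‖ * M))) with hCdef
  have key : ∀ x ∈ Ioo 0 ε, ‖D x‖ ≤ C * (‖φ x‖ ^ 2 * f x) := by
    intro x hx
    have hxI : x ∈ Icc 0 ε := ⟨hx.1.le, hx.2.le⟩
    have h1 : ‖ψ x‖ ≤ M * ‖φ x‖ :=
      le_trans ((E x).le_opNorm (φ x)) (mul_le_mul_of_nonneg_right (hM x hxI) (norm_nonneg _))
    have h2 : ‖(E x) (c (φ x))‖ ≤ M * (‖c‖ * ‖φ x‖) := by
      refine le_trans ((E x).le_opNorm _) ?_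
      exact mul_le_mul (hM x hxI) (c.le_opNorm _) (norm_nonneg _) hM0
    have h3 : ‖-(s x) • (E x) (c (φ x))‖ = |l| * f x * ‖(E x) (c (φ x))‖ := by
      rw [norm_smul, norm_neg, hsdef]
      simp [Complex.norm_real, abs_mul, abs_of_pos (hf_pos x hx)]
    have h4 : |(inner ℝ (ψ x) (-(s x) • (E x) (c (φ x))) : ℝ)|
        ≤ ‖ψ x‖ * ‖-(s x) • (E x) (c (φ x))‖ := abs_real_inner_le_norm _ _
    have h5 : ‖D x‖ ≤ 2 * (‖ψ x‖ * ‖-(s x) • (E x) (c (φ x))‖) := by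
      rw [hDdef]
      simp only [Real.norm_eq_abs, abs_mul, abs_two]
      exact mul_le_mul_of_nonneg_left h4 (by norm_num)
    have hf0 : 0 ≤ f x := (hf_pos x hx).le
    have hφ0 : 0 ≤ ‖φ x‖ := norm_nonneg _
    have hc0 : 0 ≤ ‖c‖ := norm_nonneg _
    have hl0 : 0 ≤ |l| := abs_nonneg l
    have hE0 : 0 ≤ ‖(E x) (c (φ x))‖ := norm_nonneg _
    have hψ0 : 0 ≤ ‖ψ x‖ := norm_nonneg _
    rw [h3] at h5
    calc ‖D x‖ ≤ 2 * (‖ψ x‖ * (|l| * f x * ‖(E x) (c (φ x))‖)) := h5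
      _ ≤ 2 * ((M * ‖φ x‖) * (|l| * f x * (M * (‖c‖ * ‖φ x‖)))) := by
          refine mul_le_mul_of_nonneg_left ?_ (by norm_num)
          refine mul_le_mul h1 ?_ (by positivity) (by positivity)
          exact mul_le_mul_of_nonneg_left h2 (by positivity)
      _ = C * (‖φ x‖ ^ 2 * f x) := by rw [hCdef]; ring
  -- integrability of the dominating function
  have hbase : IntegrableOn (fun x => ‖φ x‖ ^ 2 * f x) (Ioo 0 ε) volume := by
    refine ⟨((hφcont.norm.pow 2).mul hf_cont).aestronglyMeasurable measurableSet_Ioo, ?_⟩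
    rw [hasFiniteIntegral_iff_ofReal]
    · exact hφ_L2
    · exact (ae_restrict_iff' measurableSet_Ioo).2
        (ae_of_all _ fun x hx => mul_nonneg (by positivity) (hf_pos x hx).le)
  -- continuity of D on Ioo
  have hψcont : ContinuousOn ψ (Ioo 0 ε) :=
    (hEcont.continuousOn).clm_apply hφcont
  have hscont : ContinuousOn s (Ioo 0 ε) :=
    Complex.continuous_ofReal.comp_continuousOn (continuousOn_const.mul hf_cont)
  have hwcont : ContinuousOn (fun x => -(s x) • (E x) (c (φ x))) (Ioo 0 ε) :=
    (hscont.neg).smul ((hEcont.continuousOn).clm_apply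
      (c.continuous.comp_continuousOn hφcont))
  have hDcont : ContinuousOn D (Ioo 0 ε) :=
    continuousOn_const.mul (hψcont.inner hwcont)
  have hD_int : IntegrableOn D (Ioo 0 ε) volume := by
    refine Integrable.mono' (hbase.const_mul C)
      (hDcont.aestronglyMeasurable measurableSet_Ioo) ?_
    exact (ae_restrict_iff' measurableSet_Ioo).2 (ae_of_all _ key)
  have hderiv_eq : ∀ x ∈ Ioo 0 ε, deriv g x = D x := fun x hx => (hg x hx).deriv
  have hDg_int : IntegrableOn (deriv g) (Ioo 0 ε) volume :=
    hD_int.congr_fun (fun x hx => (hderiv_eq x hx).symm) measurableSet_Ioo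
  refine ⟨hDg_int, ?_⟩
  -- limit part
  set m : ℝ := ε / 2 with hmdef
  have hm : m ∈ Ioo (0:ℝ) ε := ⟨half_pos hε, half_lt_self hε⟩
  have hIoc : IntegrableOn (deriv g) (Ioc 0 m) volume :=
    hDg_int.mono_set (fun t ht => ⟨ht.1, lt_of_le_of_lt ht.2 hm.2⟩)
  have hIcc : IntegrableOn (deriv g) (Icc 0 m) volume :=
    (integrableOn_Icc_iff_integrableOn_Ioc enorm_ne_top).2 hIoc
  set F : ℝ → ℝ := fun u => ∫ t in Ioc 0 u, deriv g t with hFdef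
  have hFcont : ContinuousOn F (Icc 0 m) := intervalIntegral.continuousOn_primitive hIcc
  have hFTC : ∀ x ∈ Ioo 0 m, g x = (g m - F m) + F x := by
    intro x hx
    have hsub : Icc x m ⊆ Ioo 0 ε := fun t ht =>
      ⟨lt_of_lt_of_le hx.1 ht.1, lt_of_le_of_lt ht.2 hm.2⟩
    have hint : IntervalIntegrable (deriv g) volume x m := by
      refine (hDg_int.mono_set ?_).intervalIntegrable
      rw [uIcc_of_le hx.2.le]; exact hsub
    have hFTC0 := intervalIntegral.integral_eq_sub_of_hasDerivAt (f := g) (f' := deriv g)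
      (fun t ht => by
        rw [uIcc_of_le hx.2.le] at ht
        have := hg t (hsub ht)
        rwa [← (hg t (hsub ht)).deriv] at this) hint
    have hunion : (∫ t in Ioc 0 m, deriv g t)
        = (∫ t in Ioc 0 x, deriv g t) + ∫ t in Ioc x m, deriv g t := by
      rw [← Ioc_union_Ioc_eq_Ioc hx.1.le hx.2.le]
      exact setIntegral_union (Ioc_disjoint_Ioc_of_le le_rfl) measurableSet_Ioc
        (hIoc.mono_set (Ioc_subset_Ioc_right hx.2.le))
        (hIoc.mono_set (Ioc_subset_Ioc_left hx.1.le))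
    rw [intervalIntegral.integral_of_le hx.2.le] at hFTC0
    have : F m = F x + ∫ t in Ioc x m, deriv g t := hunion
    have hgm : g m - g x = ∫ t in Ioc x m, deriv g t := hFTC0.symm ▸ rfl
    linarith [hFTC0, hunion]
  have hF0 : Tendsto F (nhdsWithin 0 (Icc 0 m)) (nhds 0) := by
    have h := hFcont 0 ⟨le_refl 0, hm.1.le⟩
    have hF00 : F 0 = 0 := by simp [hFdef]
    rw [ContinuousWithinAt, hF00] at h
    exact h
  have hF0' : Tendsto F (nhdsWithin 0 (Ioi 0)) (nhds 0) := by
    refine hF0.mono_left ?_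
    rw [← nhdsWithin_Ioo_eq_nhdsGT hm.1]
    exact nhdsWithin_mono _ Ioo_subset_Icc_self
  refine ⟨g m - F m, ?_⟩
  have hTF : Tendsto (fun x => (g m - F m) + F x) (nhdsWithin 0 (Ioi 0))
      (nhds ((g m - F m) + 0)) := tendsto_const_nhds.add hF0'
  rw [add_zero] at hTF
  refine hTF.congr' (Filter.eventually_of_mem (Ioo_mem_nhdsGT hm.1)
    fun x hx => (hFTC x hx).symm)
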